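/- Let {P^(β)}_{β ∈ ℕ₀^d} be matrices in ℂ^{N×N} satisfying the convolution identity P^(β) = Σ_{ν₁ + ν₂ = β} P^(ν₁) P^(ν₂) for every multi-index β, and suppose rank P^(0) = m₀ (where 0 is the zero multi-index). Then for every β = (β₁,…,β_d), rank P^(β) ≤ m₀ · Π_{j=1}^d (β_j + 1). -/

import Mathlib

open Finset Submodule

section Aux
variable {d N : ℕ} (P : (Fin d →₀ ℕ) → Matrix (Fin N) (Fin N) ℂ)

/-- The range of `P 0`. -/
noncomputable def RP : Submodule ℂ (Fin N → ℂ) := LinearMap.range (P 0).mulVecLin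

/-- The covering subspace. -/
noncomputable def EP (β : Fin d →₀ ℕ) : Submodule ℂ (Fin N → ℂ) :=
  ⨆ ν ∈ Finset.Iic β, Submodule.map (P ν).mulVecLin (RP P)

lemma term_le_EP {ν β : Fin d →₀ ℕ} (h : ν ≤ β) :
    Submodule.map (P ν).mulVecLin (RP P) ≤ EP P β := by
  have := le_biSup (f := fun ν => Submodule.map (P ν).mulVecLin (RP P))
    (s := Finset.Iic β) (by simpa using h)
  simpa [EP] using this

lemma EP_mono {β β' : Fin d →₀ ℕ} (h : β ≤ β') : EP P β ≤ EP P β' := by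
  refine iSup₂_le fun ν hν => ?_
  exact term_le_EP P (le_trans (Finset.mem_Iic.mp hν) h)

lemma mapP0_le (X : Submodule ℂ (Fin N → ℂ)) :
    Submodule.map (P 0).mulVecLin X ≤ RP P := by
  rintro x ⟨y, -, rfl⟩; exact ⟨y, rfl⟩

lemma map_sum_le {ι : Type*} (s : Finset ι) (A : ι → Matrix (Fin N) (Fin N) ℂ)
    (X : Submodule ℂ (Fin N → ℂ)) :
    Submodule.map (∑ i ∈ s, A i).mulVecLin X ≤
      ⨆ i ∈ s, Submodule.map (A i).mulVecLin X := by
  rintro x ⟨y, hy, rfl⟩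
  have : (∑ i ∈ s, A i).mulVecLin y = ∑ i ∈ s, (A i).mulVecLin y := by
    simp only [Matrix.mulVecLin_apply]
    classical
    induction s using Finset.induction with
    | empty => simp
    | insert _ _ h ih => simp [Finset.sum_insert h, Matrix.add_mulVec, ih]
  rw [this]
  refine Submodule.sum_mem _ fun i hi => ?_
  exact le_biSup (f := fun i => Submodule.map (A i).mulVecLin X) hi ⟨y, hy, rfl⟩

end Aux

section Aux2
variable {d N : ℕ} (P : (Fin d →₀ ℕ) → Matrix (Fin N) (Fin N) ℂ)
variable (hconv : ∀ β : Fin d →₀ ℕ,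
      P β = ∑ p ∈ Finset.HasAntidiagonal.antidiagonal β, P p.1 * P p.2)

/-- Total degree of a multi-index. -/
def degP (σ : Fin d →₀ ℕ) : ℕ := ∑ j, σ j

lemma degP_add (σ τ : Fin d →₀ ℕ) : degP (σ + τ) = degP σ + degP τ := by
  simp [degP, Finset.sum_add_distrib]

lemma degP_eq_zero {σ : Fin d →₀ ℕ} (h : degP σ = 0) : σ = 0 := by
  have := Finset.sum_eq_zero_iff.mp h
  ext j; exact this j (Finset.mem_univ j)

lemma one_le_degP {σ : Fin d →₀ ℕ} (h : σ ≠ 0) : 1 ≤ degP σ :=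
  Nat.one_le_iff_ne_zero.mpr fun hc => h (degP_eq_zero hc)

include hconv

lemma P0_idem : P 0 * P 0 = P 0 := by
  have := hconv 0
  rw [Finsupp.antidiagonal_zero, Finset.sum_singleton] at this
  exact this.symm

lemma RP_le_EP (β : Fin d →₀ ℕ) : RP P ≤ EP P β := by
  refine le_trans ?_ (term_le_EP P (show (0 : Fin d →₀ ℕ) ≤ β from zero_le))
  rintro x ⟨y, rfl⟩
  refine ⟨(P 0).mulVecLin y, ⟨y, rfl⟩, ?_⟩
  rw [← LinearMap.comp_apply, ← Matrix.mulVecLin_mul, P0_idem P hconv]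

end Aux2

section Aux3
variable {d N : ℕ} (P : (Fin d →₀ ℕ) → Matrix (Fin N) (Fin N) ℂ)
variable (hconv : ∀ β : Fin d →₀ ℕ,
      P β = ∑ p ∈ Finset.HasAntidiagonal.antidiagonal β, P p.1 * P p.2)

lemma length_le_degP_sum : ∀ l : List (Fin d →₀ ℕ), (∀ ν ∈ l, ν ≠ 0) →
    l.length ≤ degP l.sum := by
  intro l
  induction l with
  | nil => simp
  | cons a t ih =>
    intro h
    rw [List.sum_cons, degP_add, List.length_cons]
    have h1 : 1 ≤ degP a := one_le_degP (h a List.mem_cons_self)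
    have h2 := ih fun ν hν => h ν (List.mem_cons_of_mem a hν)
    omega

include hconv

lemma list_prod_le_EP : ∀ (n : ℕ) (l : List (Fin d →₀ ℕ)), (∀ ν ∈ l, ν ≠ 0) →
    l ≠ [] → degP l.sum - l.length = n →
    Submodule.map ((l.map P).prod).mulVecLin (RP P) ≤ EP P l.sum := by
  intro n
  induction n using Nat.strong_induction_on with
  | _ n IH =>
    rintro (_ | ⟨ν₁, rest⟩) hnz hne hmeas
    · exact absurd rfl hne
    rcases rest with _ | ⟨ν₂', rest'⟩
    · -- singleton list
      simp only [List.map_cons, List.map_nil, List.prod_cons, List.prod_nil, mul_one,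
        List.sum_cons, List.sum_nil, add_zero]
      exact term_le_EP P le_rfl
    · -- l = ν₁ :: rest where rest = ν₂' :: rest' is nonempty
      set rest : List (Fin d →₀ ℕ) := ν₂' :: rest' with hrest
      have hprod : ((ν₁ :: rest).map P).prod = P ν₁ * ((rest.map P).prod) := by
        simp [List.prod_cons]
      rw [hprod, Matrix.mulVecLin_mul, Submodule.map_comp]
      set X := Submodule.map ((rest.map P).prod).mulVecLin (RP P) with hX
      rw [hconv ν₁]
      refine le_trans (map_sum_le _ _ _) (iSup₂_le ?_)
      rintro ⟨c, e⟩ hp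
      have hce : c + e = ν₁ := Finset.HasAntidiagonal.mem_antidiagonal.mp hp
      simp only
      rw [Matrix.mulVecLin_mul, Submodule.map_comp]
      by_cases hc : c = 0
      · subst hc
        exact le_trans (mapP0_le P _) (RP_le_EP P hconv _)
      by_cases he : e = 0
      · subst he
        refine le_trans (Submodule.map_mono (mapP0_le P X)) ?_
        refine le_trans (term_le_EP P (β := (ν₁ :: rest).sum) ?_) le_rfl
        rw [List.sum_cons, ← hce, add_zero]
        exact self_le_add_right _ _
      · -- both nonzero: use the longer list c :: e :: rest
        have hsum : (c :: e :: rest).sum = (ν₁ :: rest).sum := by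
          simp [List.sum_cons, ← hce, add_assoc]
        have hnz' : ∀ ν ∈ c :: e :: rest, ν ≠ 0 := by
          intro ν hν
          simp only [List.mem_cons] at hν
          rcases hν with rfl | rfl | h
          · exact hc
          · exact he
          · exact hnz ν (List.mem_cons_of_mem _ h)
        have hlen : (ν₁ :: rest).length + 1 ≤ degP (ν₁ :: rest).sum := by
          have := length_le_degP_sum (c :: e :: rest) hnz'
          rw [hsum] at this
          simpa using this
        have hn1 : 1 ≤ n := by omega
        have hmeas' : degP (c :: e :: rest).sum - (c :: e :: rest).length = n - 1 := by
          rw [hsum]; simp only [List.length_cons] at hmeas ⊢; omega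
        have := IH (n - 1) (by omega) (c :: e :: rest) hnz'
          (by simp) hmeas'
        rw [hsum] at this
        refine le_trans ?_ this
        simp only [List.map_cons, List.prod_cons, Matrix.mulVecLin_mul, Submodule.map_comp]
        exact le_rfl

end Aux3

section Aux4
variable {d N : ℕ} (P : (Fin d →₀ ℕ) → Matrix (Fin N) (Fin N) ℂ)
variable (hconv : ∀ β : Fin d →₀ ℕ,
      P β = ∑ p ∈ Finset.HasAntidiagonal.antidiagonal β, P p.1 * P p.2)

include hconv

lemma range_le_EP : ∀ (n : ℕ) (β : Fin d →₀ ℕ), degP β = n →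
    LinearMap.range (P β).mulVecLin ≤ EP P β := by
  intro n
  induction n using Nat.strong_induction_on with
  | _ n IH =>
    intro β hβ
    rw [LinearMap.range_eq_map, hconv β]
    refine le_trans (map_sum_le _ _ _) (iSup₂_le ?_)
    rintro ⟨ν₁, ν₂⟩ hp
    have hsum : ν₁ + ν₂ = β := Finset.HasAntidiagonal.mem_antidiagonal.mp hp
    simp only
    rw [Matrix.mulVecLin_mul, Submodule.map_comp]
    by_cases h₁ : ν₁ = 0
    · subst h₁
      exact le_trans (mapP0_le P _) (RP_le_EP P hconv _)
    by_cases h₂ : ν₂ = 0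
    · subst h₂
      refine le_trans (Submodule.map_mono ?_) (term_le_EP P (ν := ν₁) ?_)
      · exact le_of_eq (Submodule.map_top _)
      · rw [← hsum, add_zero]
    · -- both nonzero
      have hd2 : degP ν₂ < n := by
        have := one_le_degP (d := d) h₁
        rw [← hβ, ← hsum, degP_add]; omega
      have hrange : Submodule.map (P ν₂).mulVecLin ⊤ ≤ EP P ν₂ := by
        rw [Submodule.map_top]
        exact IH _ hd2 ν₂ rfl
      refine le_trans (Submodule.map_mono hrange) ?_
      rw [EP, Submodule.map_iSup]
      refine iSup_le fun μ => ?_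
      rw [Submodule.map_iSup]
      refine iSup_le fun hμ => ?_
      have hμle : μ ≤ ν₂ := Finset.mem_Iic.mp hμ
      by_cases hμ0 : μ = 0
      · subst hμ0
        refine le_trans (Submodule.map_mono (mapP0_le P _)) (term_le_EP P ?_)
        rw [← hsum]; exact self_le_add_right _ _
      · -- list [ν₁, μ]
        have hl := list_prod_le_EP P hconv (degP ([ν₁, μ].sum) - 2) [ν₁, μ]
          (by intro ν hν; simp only [List.mem_cons] at hν
              rcases hν with rfl | rfl | h
              · exact h₁
              · exact hμ0
              · simp at h)
          (by simp) (by simp)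
        refine le_trans (le_trans ?_ hl) (EP_mono P ?_)
        · simp only [List.map_cons, List.map_nil, List.prod_cons, List.prod_nil, mul_one,
            Matrix.mulVecLin_mul, Submodule.map_comp]
          exact le_rfl
        · simp only [List.sum_cons, List.sum_nil, add_zero]
          rw [← hsum]
          exact add_le_add_right hμle ν₁

end Aux4

section Aux5
variable {N : ℕ}

lemma finrank_biSup_le {ι : Type*} (s : Finset ι) (M : ι → Submodule ℂ (Fin N → ℂ)) :
    Module.finrank ℂ ↥(⨆ i ∈ s, M i) ≤ ∑ i ∈ s, Module.finrank ℂ ↥(M i) := by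
  classical
  induction s using Finset.induction with
  | empty => simp
  | @insert a s h ih =>
    rw [Finset.iSup_insert, Finset.sum_insert h]
    refine le_trans ?_ (add_le_add_right ih _)
    have := Submodule.finrank_sup_add_finrank_inf_eq (M a) (⨆ i ∈ s, M i)
    omega

lemma card_Iic_finsupp {d : ℕ} (β : Fin d →₀ ℕ) :
    (Finset.Iic β).card = ∏ j : Fin d, (β j + 1) := by
  rw [Finsupp.card_Iic]
  have : ∀ i, (Finset.Iic (β i)).card = β i + 1 := fun i => Nat.card_Iic _
  simp only [this]
  refine Finset.prod_subset (Finset.subset_univ _) ?_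
  intro x _ hx
  simp [Finsupp.notMem_support_iff.mp hx]

end Aux5

/-- Upper bound on the rank of the coefficient matrices of an idempotent-valued
analytic matrix function: if the coefficients satisfy the convolution identity
`P^(β) = Σ_{ν₁+ν₂=β} P^(ν₁) P^(ν₂)` and `rank P^(0) = m₀`, then
`rank P^(β) ≤ m₀ ∏ⱼ (βⱼ + 1)`. -/
theorem rank_projector_coefficients {d N m₀ : ℕ}
    (P : (Fin d →₀ ℕ) → Matrix (Fin N) (Fin N) ℂ)
    (hconv : ∀ β : Fin d →₀ ℕ,
      P β = ∑ p ∈ Finset.HasAntidiagonal.antidiagonal β, P p.1 * P p.2)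
    (hrank : (P 0).rank = m₀) (β : Fin d →₀ ℕ) :
    (P β).rank ≤ m₀ * ∏ j : Fin d, (β j + 1) := by
  have hR : Module.finrank ℂ ↥(RP P) = m₀ := hrank
  have h1 : (P β).rank ≤ Module.finrank ℂ ↥(EP P β) :=
    Submodule.finrank_mono (range_le_EP P hconv (degP β) β rfl)
  have h2 : Module.finrank ℂ ↥(EP P β) ≤
      ∑ ν ∈ Finset.Iic β, Module.finrank ℂ
        ↥(Submodule.map (P ν).mulVecLin (RP P)) :=
    finrank_biSup_le _ _
  have h3 : ∀ ν ∈ Finset.Iic β,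
      Module.finrank ℂ ↥(Submodule.map (P ν).mulVecLin (RP P)) ≤ m₀ := by
    intro ν _
    exact le_trans (Submodule.finrank_map_le _ _) (le_of_eq hR)
  have h4 := Finset.sum_le_card_nsmul _ _ _ h3
  rw [smul_eq_mul, card_Iic_finsupp] at h4
  calc (P β).rank ≤ _ := h1
    _ ≤ _ := h2
    _ ≤ _ := h4
    _ = m₀ * ∏ j : Fin d, (β j + 1) := mul_comm _ _
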